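/- In the proof of the disjoint-groups hitting number lower bound: if H ⊆ ⋃_i P_i intersects every union of two disjoint colluding sets, then for each i, H must contain a hitting set within P_i for unions of two disjoint colluding sets inside P_i (so |H ∩ P_i| ≥ ⌈N_i/T_i⌉ - 1), and additionally H can completely miss a colluding set in at most one group, which together yield |H| ≥ Σ_i ⌈N_i/T_i⌉ - 1. -/
import Mathlib


/-- The cyclic interval `{j, j+1, ..., j+T-1}` (mod `N`). -/
def cycInt (N T : ℕ) (j : ZMod N) : Finset (ZMod N) :=
  (Finset.range T).image (fun t : ℕ => j + (t : ZMod N))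

section Aux
set_option linter.unusedSectionVars false
variable {N T : ℕ} [NeZero N]

lemma mem_cycInt {j x : ZMod N} : x ∈ cycInt N T j ↔ ∃ t < T, x = j + (t : ZMod N) := by
  simp [cycInt, eq_comm]

lemma mem_cycInt_nat {a : ℕ} (ha : a + T ≤ N) {x : ZMod N} :
    x ∈ cycInt N T (a : ZMod N) ↔ a ≤ x.val ∧ x.val < a + T := by
  rw [mem_cycInt]
  constructor
  · rintro ⟨t, ht, rfl⟩
    have : ((a : ZMod N) + (t : ZMod N)) = ((a + t : ℕ) : ZMod N) := by push_cast; ring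
    rw [this, ZMod.val_natCast_of_lt (by omega)]
    omega
  · rintro ⟨h1, h2⟩
    refine ⟨x.val - a, by omega, ?_⟩
    have h3 : ((a : ZMod N) + ((x.val - a : ℕ) : ZMod N)) = ((a + (x.val - a) : ℕ) : ZMod N) := by
      push_cast; ring
    rw [h3]
    have h4 : a + (x.val - a) = x.val := by omega
    rw [h4, ZMod.natCast_val, ZMod.cast_id]

lemma cycInt_disjoint {a b : ℕ} (hab : a + T ≤ b) (hb : b + T ≤ N) :
    Disjoint (cycInt N T (a : ZMod N)) (cycInt N T (b : ZMod N)) := by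
  rw [Finset.disjoint_left]
  intro x hxa hxb
  rw [mem_cycInt_nat (by omega)] at hxa
  rw [mem_cycInt_nat hb] at hxb
  omega

lemma cycInt_image_add (j c : ZMod N) :
    (cycInt N T j).image (· + c) = cycInt N T (j + c) := by
  ext x
  simp only [Finset.mem_image, mem_cycInt]
  constructor
  · rintro ⟨y, ⟨t, ht, rfl⟩, rfl⟩
    exact ⟨t, ht, by ring⟩
  · rintro ⟨t, ht, rfl⟩
    exact ⟨j + t, ⟨t, ht, rfl⟩, by ring⟩

lemma ceil_facts (hT : 1 ≤ T) (hN : 2 * T ≤ N) :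
    N ≤ ⌈(N : ℚ) / (T : ℚ)⌉₊ * T ∧ (⌈(N : ℚ) / (T : ℚ)⌉₊ - 1) * T < N ∧
      2 ≤ ⌈(N : ℚ) / (T : ℚ)⌉₊ := by
  have hT0 : (0 : ℚ) < (T : ℚ) := by exact_mod_cast hT
  set k := ⌈(N : ℚ) / (T : ℚ)⌉₊ with hk
  have h1 : (N : ℚ) / T ≤ k := Nat.le_ceil _
  have h1' : (N : ℚ) ≤ k * T := by rwa [div_le_iff₀ hT0] at h1
  have hNk : N ≤ k * T := by exact_mod_cast h1'
  have hk2 : 2 ≤ k := by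
    have hTN : (T : ℚ) < N := by exact_mod_cast (by omega : T < N)
    have h1N : ((1 : ℕ) : ℚ) < (N : ℚ) / T := by
      rw [lt_div_iff₀ hT0]; push_cast; linarith
    have := Nat.lt_ceil.mpr h1N
    omega
  have h2 : ((k - 1 : ℕ) : ℚ) < (N : ℚ) / T := Nat.lt_ceil.mp (by omega)
  have h2' : ((k - 1 : ℕ) : ℚ) * T < N := by rwa [lt_div_iff₀ hT0] at h2
  exact ⟨hNk, by exact_mod_cast h2', hk2⟩

lemma core_special (hT : 1 ≤ T) (hN : 2 * T ≤ N) (A : Finset (ZMod N))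
    (hcard : A.card + 2 ≤ ⌈(N : ℚ) / (T : ℚ)⌉₊) (hspec : (-1 : ZMod N) ∈ A) :
    ∃ a b : ℕ, a + T ≤ b ∧ b + T ≤ N ∧
      (∀ x ∈ cycInt N T (a : ZMod N), x ∉ A) ∧ (∀ x ∈ cycInt N T (b : ZMod N), x ∉ A) := by
  obtain ⟨hNk, hkN, hk2⟩ := ceil_facts (N := N) (T := T) hT hN
  set k := ⌈(N : ℚ) / (T : ℚ)⌉₊ with hk
  have hN0 : 0 < N := Nat.pos_of_ne_zero (NeZero.ne N)
  set q : ℕ := if T ∣ N then k else k - 1 with hq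
  have hqT : q * T ≤ N := by
    by_cases hd : T ∣ N
    · simp only [hq, if_pos hd]
      obtain ⟨c, hc⟩ := hd
      have hkc : k - 1 < c := by
        by_contra hcon
        push_neg at hcon
        have h2 : T * c ≤ T * (k - 1) := Nat.mul_le_mul_left T hcon
        have h3 : (k - 1) * T < T * c := by rw [← hc]; exact hkN
        rw [mul_comm] at h3
        exact absurd h3 (not_lt.mpr h2)
      calc k * T ≤ c * T := Nat.mul_le_mul_right T (by omega)
        _ = N := by rw [hc]; ring
    · simp only [hq, if_neg hd]
      exact le_of_lt hkN
  have hneg : (-1 : ZMod N).val = N - 1 := by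
    have h1 : ((N - 1 : ℕ) : ZMod N) = -1 := by
      have h2 : ((N : ℕ) : ZMod N) = 0 := ZMod.natCast_self N
      rw [Nat.cast_sub (by omega : 1 ≤ N), h2]
      simp
    rw [← h1, ZMod.val_natCast_of_lt (by omega)]
  have hq2 : (A.filter (fun a => a.val < q * T)).card + 2 ≤ q := by
    by_cases hd : T ∣ N
    · have hsub : A.filter (fun a => a.val < q * T) ⊆ A := Finset.filter_subset _ _
      have h1 := Finset.card_le_card hsub
      have hqk : q = k := by rw [hq, if_pos hd]
      omega
    · have hqT' : q * T < N := by simp only [hq, if_neg hd]; exact hkN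
      have hsub : A.filter (fun a => a.val < q * T) ⊆ A.erase (-1) := by
        intro a ha
        rw [Finset.mem_filter] at ha
        rw [Finset.mem_erase]
        refine ⟨fun hc => ?_, ha.1⟩
        rw [hc, hneg] at ha
        omega
      have h1 := Finset.card_le_card hsub
      have h2 : (A.erase (-1)).card = A.card - 1 := Finset.card_erase_of_mem hspec
      have h3 : 1 ≤ A.card := Finset.card_pos.mpr ⟨-1, hspec⟩
      have hqk : q = k - 1 := by rw [hq, if_neg hd]
      omega
  set Good := (Finset.range q).filter
    (fun jj => ∀ x ∈ cycInt N T ((jj * T : ℕ) : ZMod N), x ∉ A) with hGood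
  have htile : ∀ jj < q, jj * T + T ≤ N := by
    intro jj hjj
    calc jj * T + T = (jj + 1) * T := by ring
      _ ≤ q * T := Nat.mul_le_mul_right T (by omega)
      _ ≤ N := hqT
  have hBadsub : (Finset.range q).filter
      (fun jj => ¬ ∀ x ∈ cycInt N T ((jj * T : ℕ) : ZMod N), x ∉ A) ⊆
      (A.filter (fun a => a.val < q * T)).image (fun a => a.val / T) := by
    intro jj hjj
    rw [Finset.mem_filter, Finset.mem_range] at hjj
    obtain ⟨hjq, hbad⟩ := hjj
    push_neg at hbad
    obtain ⟨x, hx1, hx2⟩ := hbad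
    rw [mem_cycInt_nat (htile jj hjq)] at hx1
    rw [Finset.mem_image]
    refine ⟨x, ?_, ?_⟩
    · rw [Finset.mem_filter]
      refine ⟨hx2, ?_⟩
      calc x.val < jj * T + T := hx1.2
        _ = (jj + 1) * T := by ring
        _ ≤ q * T := Nat.mul_le_mul_right T (by omega)
    · exact Nat.div_eq_of_lt_le hx1.1 (by rw [(by ring : (jj + 1) * T = jj * T + T)]; exact hx1.2)
  have hGB := Finset.card_filter_add_card_filter_not (s := Finset.range q)
    (p := fun jj => ∀ x ∈ cycInt N T ((jj * T : ℕ) : ZMod N), x ∉ A)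
  have h2G : 2 ≤ Good.card := by
    have h1 := Finset.card_le_card hBadsub
    have h2 := Finset.card_image_le (s := A.filter (fun a => a.val < q * T))
      (f := fun a => a.val / T)
    rw [Finset.card_range] at hGB
    rw [← hGood] at hGB
    omega
  obtain ⟨j₁, hj₁, j₂, hj₂, hne⟩ := Finset.one_lt_card.mp h2G
  have key : ∀ u v : ℕ, u ∈ Good → v ∈ Good → u < v →
      ∃ a b : ℕ, a + T ≤ b ∧ b + T ≤ N ∧
        (∀ x ∈ cycInt N T (a : ZMod N), x ∉ A) ∧ (∀ x ∈ cycInt N T (b : ZMod N), x ∉ A) := by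
    intro u v hu hv huv
    rw [hGood, Finset.mem_filter, Finset.mem_range] at hu hv
    refine ⟨u * T, v * T, ?_, ?_, ?_, ?_⟩
    · calc u * T + T = (u + 1) * T := by ring
        _ ≤ v * T := Nat.mul_le_mul_right T (by omega)
    · exact htile v hv.1
    · exact_mod_cast hu.2
    · exact_mod_cast hv.2
  rcases lt_or_gt_of_ne hne with h | h
  · exact key j₁ j₂ hj₁ hj₂ h
  · exact key j₂ j₁ hj₂ hj₁ h

lemma core (hT : 1 ≤ T) (hN : 2 * T ≤ N) (A : Finset (ZMod N))
    (hcard : A.card + 2 ≤ ⌈(N : ℚ) / (T : ℚ)⌉₊) :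
    ∃ j₁ j₂ : ZMod N, Disjoint (cycInt N T j₁) (cycInt N T j₂) ∧
      (∀ x ∈ cycInt N T j₁, x ∉ A) ∧ (∀ x ∈ cycInt N T j₂, x ∉ A) := by
  rcases A.eq_empty_or_nonempty with hA | ⟨a₀, ha₀⟩
  · refine ⟨(0 : ℕ), (T : ℕ), cycInt_disjoint (by omega) (by omega), ?_, ?_⟩ <;>
      simp [hA]
  · set c : ZMod N := -1 - a₀ with hc
    set A' := A.image (· + c) with hA'
    have hcardA' : A'.card = A.card := Finset.card_image_of_injective _ (add_left_injective c)
    have hm1 : (-1 : ZMod N) ∈ A' := by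
      rw [hA', Finset.mem_image]
      exact ⟨a₀, ha₀, by rw [hc]; ring⟩
    obtain ⟨a, b, hab, hbN, hav1, hav2⟩ := core_special hT hN A' (by omega) hm1
    have hdab := cycInt_disjoint (T := T) hab hbN
    refine ⟨(a : ZMod N) - c, (b : ZMod N) - c, ?_, ?_, ?_⟩
    · have h1 : ((cycInt N T ((a : ZMod N) - c)).image (· + c)) = cycInt N T (a : ZMod N) := by
        rw [cycInt_image_add]; congr 1; ring
      have h2 : ((cycInt N T ((b : ZMod N) - c)).image (· + c)) = cycInt N T (b : ZMod N) := by
        rw [cycInt_image_add]; congr 1; ring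
      have hinj : Function.Injective (· + c) := add_left_injective c
      rw [← h1, ← h2, Finset.disjoint_image hinj] at hdab
      exact hdab
    · intro x hx hxA
      have hxc : x + c ∈ cycInt N T (a : ZMod N) := by
        have : x + c ∈ (cycInt N T ((a : ZMod N) - c)).image (· + c) :=
          Finset.mem_image_of_mem _ hx
        rwa [cycInt_image_add, (by ring : (a : ZMod N) - c + c = (a : ZMod N))] at this
      exact hav1 _ hxc (Finset.mem_image_of_mem _ hxA)
    · intro x hx hxA
      have hxc : x + c ∈ cycInt N T (b : ZMod N) := by
        have : x + c ∈ (cycInt N T ((b : ZMod N) - c)).image (· + c) :=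
          Finset.mem_image_of_mem _ hx
        rwa [cycInt_image_add, (by ring : (b : ZMod N) - c + c = (b : ZMod N))] at this
      exact hav2 _ hxc (Finset.mem_image_of_mem _ hxA)

lemma card_starts (hTN : T ≤ N) (a : ZMod N) :
    (Finset.univ.filter (fun j : ZMod N => a ∈ cycInt N T j)).card = T := by
  have hset : Finset.univ.filter (fun j : ZMod N => a ∈ cycInt N T j) =
      (Finset.range T).image (fun t : ℕ => a - (t : ZMod N)) := by
    ext j
    simp only [Finset.mem_filter, Finset.mem_univ, true_and, Finset.mem_image,
      Finset.mem_range, mem_cycInt]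
    constructor
    · rintro ⟨t, ht, hat⟩
      exact ⟨t, ht, by rw [hat]; ring⟩
    · rintro ⟨t, ht, rfl⟩
      exact ⟨t, ht, by ring⟩
  rw [hset, Finset.card_image_of_injOn, Finset.card_range]
  intro s hs t ht hst
  simp only [Finset.coe_range, Set.mem_Iio] at hs ht
  have h2 : ((s : ℕ) : ZMod N) = ((t : ℕ) : ZMod N) := sub_right_injective hst
  have := congrArg ZMod.val h2
  rwa [ZMod.val_natCast_of_lt (by omega), ZMod.val_natCast_of_lt (by omega)] at this

lemma hit_all (hT : 1 ≤ T) (hTN : T ≤ N) (A : Finset (ZMod N))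
    (h : ∀ j : ZMod N, ∃ x ∈ cycInt N T j, x ∈ A) :
    ⌈(N : ℚ) / (T : ℚ)⌉₊ ≤ A.card := by
  have hNT : N ≤ A.card * T := by
    have hsum : (N : ℕ) ≤ ∑ j : ZMod N, (A.filter (· ∈ cycInt N T j)).card := by
      calc (N : ℕ) = ∑ _j : ZMod N, 1 := by
            rw [Finset.sum_const, smul_eq_mul, mul_one, Finset.card_univ, ZMod.card]
        _ ≤ _ := by
            apply Finset.sum_le_sum
            intro j _
            obtain ⟨x, hx1, hx2⟩ := h j
            exact Finset.card_pos.mpr ⟨x, Finset.mem_filter.mpr ⟨hx2, hx1⟩⟩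
    have hswap : ∑ j : ZMod N, (A.filter (· ∈ cycInt N T j)).card = A.card * T := by
      calc ∑ j : ZMod N, (A.filter (· ∈ cycInt N T j)).card
          = ∑ j : ZMod N, ∑ a ∈ A, if a ∈ cycInt N T j then 1 else 0 := by
            refine Finset.sum_congr rfl fun j _ => ?_
            rw [Finset.card_filter]
        _ = ∑ a ∈ A, ∑ j : ZMod N, if a ∈ cycInt N T j then 1 else 0 := Finset.sum_comm
        _ = ∑ a ∈ A, (Finset.univ.filter (fun j : ZMod N => a ∈ cycInt N T j)).card := by
            refine Finset.sum_congr rfl fun a _ => ?_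
            rw [Finset.card_filter]
        _ = ∑ _a ∈ A, T := Finset.sum_congr rfl fun a _ => card_starts hTN a
        _ = A.card * T := by rw [Finset.sum_const, smul_eq_mul]
    omega
  rw [Nat.ceil_le, div_le_iff₀ (by exact_mod_cast hT : (0 : ℚ) < T)]
  exact_mod_cast hNT

end Aux

/-- In the disjoint-groups setting (groups identified with `ZMod (Nc i)`, colluding sets
the cyclic intervals of length `T i`), if `H` hits every union of two disjoint colluding
sets, then: within each group `H` contains at least `⌈Nc i / T i⌉ - 1` elements; `H` can
completely miss a colluding set in at most one group; and
`|H| ≥ Σ_i ⌈Nc i / T i⌉ - 1`. -/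
theorem disjoint_groups_hitting_lower_bound_steps (M : ℕ) (hM : 2 ≤ M)
    (Nc T : Fin M → ℕ) [∀ i, NeZero (Nc i)]
    (hT : ∀ i, 1 ≤ T i) (hN : ∀ i, 2 * T i ≤ Nc i)
    (H : Finset ((i : Fin M) × ZMod (Nc i)))
    (hhit : ∀ S : Finset ((i : Fin M) × ZMod (Nc i)),
      (∃ C₁ C₂ : Finset ((i : Fin M) × ZMod (Nc i)),
        (∃ i j, C₁ = (cycInt (Nc i) (T i) j).image (Sigma.mk i)) ∧
        (∃ i j, C₂ = (cycInt (Nc i) (T i) j).image (Sigma.mk i)) ∧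
        Disjoint C₁ C₂ ∧ C₁ ∪ C₂ ⊆ S) → (S ∩ H).Nonempty) :
    (∀ i : Fin M,
      ⌈(Nc i : ℚ) / (T i : ℚ)⌉₊ - 1 ≤ (H.filter (fun x => x.1 = i)).card) ∧
    ((Finset.univ.filter (fun i : Fin M =>
        ∃ j : ZMod (Nc i), ∀ n ∈ cycInt (Nc i) (T i) j,
          (⟨i, n⟩ : (i : Fin M) × ZMod (Nc i)) ∉ H)).card ≤ 1) ∧
    (∑ i, ⌈(Nc i : ℚ) / (T i : ℚ)⌉₊ - 1 ≤ H.card) := by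
  have hA : ∀ i : Fin M, ∀ n : ZMod (Nc i),
      n ∈ Finset.univ.filter (fun n : ZMod (Nc i) =>
        (⟨i, n⟩ : (i : Fin M) × ZMod (Nc i)) ∈ H) ↔
      (⟨i, n⟩ : (i : Fin M) × ZMod (Nc i)) ∈ H := by
    intro i n
    simp
  have hfib : ∀ i : Fin M, H.filter (fun x => x.1 = i) =
      (Finset.univ.filter (fun n : ZMod (Nc i) =>
        (⟨i, n⟩ : (i : Fin M) × ZMod (Nc i)) ∈ H)).image (Sigma.mk i) := by
    intro i
    ext x
    rcases x with ⟨i', n⟩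
    simp only [Finset.mem_filter, Finset.mem_image, Finset.mem_univ, true_and]
    constructor
    · rintro ⟨hH, h⟩
      subst h
      exact ⟨n, hH, rfl⟩
    · rintro ⟨m, hm, hEq⟩
      cases hEq
      exact ⟨hm, rfl⟩
  have hfibcard : ∀ i : Fin M, (H.filter (fun x => x.1 = i)).card =
      (Finset.univ.filter (fun n : ZMod (Nc i) =>
        (⟨i, n⟩ : (i : Fin M) × ZMod (Nc i)) ∈ H)).card := by
    intro i
    rw [hfib i, Finset.card_image_of_injective _ sigma_mk_injective]
  -- Part 1
  have part1 : ∀ i : Fin M, ⌈(Nc i : ℚ) / (T i : ℚ)⌉₊ - 1 ≤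
      (Finset.univ.filter (fun n : ZMod (Nc i) =>
        (⟨i, n⟩ : (i : Fin M) × ZMod (Nc i)) ∈ H)).card := by
    intro i
    by_contra hcon
    push_neg at hcon
    have hk2 := (ceil_facts (N := Nc i) (T := T i) (hT i) (hN i)).2.2
    obtain ⟨j₁, j₂, hdisj, hav1, hav2⟩ := core (hT i) (hN i)
      (Finset.univ.filter (fun n : ZMod (Nc i) =>
        (⟨i, n⟩ : (i : Fin M) × ZMod (Nc i)) ∈ H)) (by omega)
    obtain ⟨y, hy⟩ := hhit ((cycInt (Nc i) (T i) j₁).image (Sigma.mk i) ∪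
        (cycInt (Nc i) (T i) j₂).image (Sigma.mk i))
      ⟨_, _, ⟨i, j₁, rfl⟩, ⟨i, j₂, rfl⟩,
        (Finset.disjoint_image sigma_mk_injective).mpr hdisj, Finset.Subset.refl _⟩
    rw [Finset.mem_inter] at hy
    obtain ⟨hyS, hyH⟩ := hy
    rcases Finset.mem_union.mp hyS with h | h <;>
    · rw [Finset.mem_image] at h
      obtain ⟨n, hn, rfl⟩ := h
      first
        | exact hav1 n hn ((hA i n).mpr hyH)
        | exact hav2 n hn ((hA i n).mpr hyH)
  -- Part 2
  have part2 : (Finset.univ.filter (fun i : Fin M =>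
      ∃ j : ZMod (Nc i), ∀ n ∈ cycInt (Nc i) (T i) j,
        (⟨i, n⟩ : (i : Fin M) × ZMod (Nc i)) ∉ H)).card ≤ 1 := by
    by_contra hcon
    push_neg at hcon
    obtain ⟨i₁, hi₁, i₂, hi₂, hne⟩ := Finset.one_lt_card.mp hcon
    rw [Finset.mem_filter] at hi₁ hi₂
    obtain ⟨-, j₁, hmiss1⟩ := hi₁
    obtain ⟨-, j₂, hmiss2⟩ := hi₂
    have hd12 : Disjoint
        (((cycInt (Nc i₁) (T i₁) j₁).image (Sigma.mk i₁) :
          Finset ((i : Fin M) × ZMod (Nc i))))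
        (((cycInt (Nc i₂) (T i₂) j₂).image (Sigma.mk i₂) :
          Finset ((i : Fin M) × ZMod (Nc i)))) := by
      rw [Finset.disjoint_left]
      rintro x hx1 hx2
      rw [Finset.mem_image] at hx1 hx2
      obtain ⟨n₁, -, rfl⟩ := hx1
      obtain ⟨n₂, -, hEq⟩ := hx2
      exact hne (congrArg Sigma.fst hEq).symm
    obtain ⟨y, hy⟩ := hhit ((cycInt (Nc i₁) (T i₁) j₁).image (Sigma.mk i₁) ∪
        (cycInt (Nc i₂) (T i₂) j₂).image (Sigma.mk i₂))
      ⟨_, _, ⟨i₁, j₁, rfl⟩, ⟨i₂, j₂, rfl⟩, hd12, Finset.Subset.refl _⟩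
    rw [Finset.mem_inter] at hy
    obtain ⟨hyS, hyH⟩ := hy
    rcases Finset.mem_union.mp hyS with h | h
    · rw [Finset.mem_image] at h
      obtain ⟨n, hn, rfl⟩ := h
      exact hmiss1 n hn hyH
    · rw [Finset.mem_image] at h
      obtain ⟨n, hn, rfl⟩ := h
      exact hmiss2 n hn hyH
  refine ⟨fun i => (hfibcard i) ▸ part1 i, part2, ?_⟩
  -- Part 3
  have hHcard : H.card = ∑ i : Fin M, (Finset.univ.filter (fun n : ZMod (Nc i) =>
      (⟨i, n⟩ : (i : Fin M) × ZMod (Nc i)) ∈ H)).card := by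
    rw [Finset.card_eq_sum_card_fiberwise
      (f := Sigma.fst) (t := Finset.univ) (fun x _ => Finset.mem_univ _)]
    exact Finset.sum_congr rfl fun i _ => hfibcard i
  have hpt : ∀ i ∈ Finset.univ, ⌈(Nc i : ℚ) / (T i : ℚ)⌉₊ ≤
      (Finset.univ.filter (fun n : ZMod (Nc i) =>
        (⟨i, n⟩ : (i : Fin M) × ZMod (Nc i)) ∈ H)).card +
      (if i ∈ Finset.univ.filter (fun i : Fin M =>
        ∃ j : ZMod (Nc i), ∀ n ∈ cycInt (Nc i) (T i) j,
          (⟨i, n⟩ : (i : Fin M) × ZMod (Nc i)) ∉ H) then 1 else 0) := by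
    intro i _
    by_cases hb : i ∈ Finset.univ.filter (fun i : Fin M =>
        ∃ j : ZMod (Nc i), ∀ n ∈ cycInt (Nc i) (T i) j,
          (⟨i, n⟩ : (i : Fin M) × ZMod (Nc i)) ∉ H)
    · rw [if_pos hb]
      have := part1 i
      omega
    · rw [if_neg hb]
      rw [Finset.mem_filter] at hb
      push_neg at hb
      have hall : ∀ j : ZMod (Nc i), ∃ x ∈ cycInt (Nc i) (T i) j,
          x ∈ Finset.univ.filter (fun n : ZMod (Nc i) =>
            (⟨i, n⟩ : (i : Fin M) × ZMod (Nc i)) ∈ H) := by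
        intro j
        obtain ⟨n, hn1, hn2⟩ := hb (Finset.mem_univ i) j
        exact ⟨n, hn1, (hA i n).mpr hn2⟩
      exact hit_all (hT i) (by have := hN i; omega) _ hall
  have hsum := Finset.sum_le_sum hpt
  rw [Finset.sum_add_distrib] at hsum
  have hind : (∑ i : Fin M, (if i ∈ Finset.univ.filter (fun i : Fin M =>
      ∃ j : ZMod (Nc i), ∀ n ∈ cycInt (Nc i) (T i) j,
        (⟨i, n⟩ : (i : Fin M) × ZMod (Nc i)) ∉ H) then 1 else 0)) ≤ 1 := by
    rw [Finset.sum_ite_mem, Finset.univ_inter, Finset.sum_const, smul_eq_mul, mul_one]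
    exact part2
  omega
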